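/- Let d ≥ 2 be an integer, let E ⊆ ℝ be an open interval, and let V, A : E → ℝ be differentiable with V(s) > 0, A(s) > 0, and V'(s) ≠ 0 for all s ∈ E. Define the inradius function r : E → ℝ by r(s) = d·V(s)/A(s), and wherever r'(s) ≠ 0 define the r-elasticity of volume e(s) = (V'(s)/r'(s)) · (r(s)/V(s)). Then there exists k > 0 with A(s)^d = k·V(s)^(d−1) for all s ∈ E (i.e., the family is homogeneous) if and only if r'(s) ≠ 0 and e(s) = d for all s ∈ E. -/

import Mathlib

/-- A family is homogeneous iff the `r`-elasticity of volume is identically `d`: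
with inradius function `r(s) = d·V(s)/A(s)` and elasticity
`e(s) = (V'(s)/r'(s))·(r(s)/V(s))`, one has `A^d = k·V^(d−1)` on `E` for some
`k > 0` iff `r'(s) ≠ 0` and `e(s) = d` for every `s ∈ E`. -/
theorem homogeneous_iff_elasticity_eq_dim (d : ℕ) (hd : 2 ≤ d)
    (E : Set ℝ) (hE : IsOpen E) (hE' : E.OrdConnected)
    (V V' A A' r r' : ℝ → ℝ)
    (hV : ∀ s ∈ E, HasDerivAt V (V' s) s)
    (hA : ∀ s ∈ E, HasDerivAt A (A' s) s)
    (hVpos : ∀ s ∈ E, 0 < V s) (hApos : ∀ s ∈ E, 0 < A s)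
    (hV'ne : ∀ s ∈ E, V' s ≠ 0)
    (hrdef : ∀ s, r s = d * V s / A s)
    (hr : ∀ s ∈ E, HasDerivAt r (r' s) s) :
    (∃ k : ℝ, 0 < k ∧ ∀ s ∈ E, A s ^ d = k * V s ^ (d - 1)) ↔
      (∀ s ∈ E, r' s ≠ 0 ∧ (V' s / r' s) * (r s / V s) = d) := by
  have hdpos : (0:ℝ) < d := by positivity
  have hcast : ((d - 1 : ℕ) : ℝ) = (d:ℝ) - 1 := by
    push_cast [Nat.cast_sub (by omega : 1 ≤ d)]; ring
  have hr_eq : ∀ s ∈ E, r' s = (d * V' s * A s - d * V s * A' s) / (A s) ^ 2 := by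
    intro s hs
    have h1 : HasDerivAt (fun t => (d:ℝ) * V t / A t)
        (((d:ℝ) * V' s * A s - (d:ℝ) * V s * A' s) / (A s) ^ 2) s :=
      (((hV s hs).const_mul (d:ℝ)).div (hA s hs) (hApos s hs).ne')
    have h2 : HasDerivAt r (((d:ℝ) * V' s * A s - (d:ℝ) * V s * A' s) / (A s) ^ 2) s := by
      have : r = fun t => (d:ℝ) * V t / A t := funext hrdef
      rw [this]; exact h1
    exact (hr s hs).unique h2
  constructor
  · rintro ⟨k, hk, hkey⟩ s hs
    have hVs := hVpos s hs; have hAs := hApos s hs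
    have hArel : (d:ℝ) * A' s * V s = ((d:ℝ) - 1) * A s * V' s := by
      have hAd : HasDerivAt (fun t => A t ^ d) (d * A s ^ (d-1) * A' s) s := by
        simpa using (hA s hs).fun_pow d
      have hVd : HasDerivAt (fun t => k * V t ^ (d-1))
          (k * (((d-1:ℕ):ℝ) * V s ^ (d-1-1) * V' s)) s := by
        simpa [mul_assoc] using ((hV s hs).pow (d-1)).const_mul k
      have heq : (fun t => A t ^ d) =ᶠ[nhds s] (fun t => k * V t ^ (d-1)) := by
        filter_upwards [hE.mem_nhds hs] with t ht using hkey t ht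
      have hthis := (hVd.congr_of_eventuallyEq heq).unique hAd
      -- hthis : k * (↑(d-1) * V^(d-2) * V') = d * A^(d-1) * A'
      rw [hcast] at hthis
      have hks : A s ^ d = k * V s ^ (d-1) := hkey s hs
      have e1 : A s ^ d = A s ^ (d-1) * A s := by
        rw [← pow_succ]; congr 1; omega
      have e2 : V s ^ (d-1) = V s ^ (d-1-1) * V s := by
        rw [← pow_succ]; congr 1; omega
      rw [e1, e2] at hks
      have hApow : (0:ℝ) < A s ^ (d-1) := by positivity
      have h3 : A s ^ (d-1) * ((d:ℝ) * A' s * V s)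
          = A s ^ (d-1) * (((d:ℝ) - 1) * A s * V' s) := by
        linear_combination (-(V s)) * hthis - ((d:ℝ)-1) * V' s * hks
      exact mul_left_cancel₀ hApow.ne' h3
    have hr's : r' s = V' s / A s := by
      rw [hr_eq s hs, div_eq_div_iff (by positivity) hAs.ne']
      linear_combination (-(A s)) * hArel
    have hr'ne : r' s ≠ 0 := by
      rw [hr's]; exact div_ne_zero (hV'ne s hs) hAs.ne'
    refine ⟨hr'ne, ?_⟩
    rw [hr's, hrdef s]
    field_simp [hV'ne s hs, hAs.ne', hVs.ne']
  · intro h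
    have hArel : ∀ s ∈ E, (d:ℝ) * A' s * V s = ((d:ℝ) - 1) * A s * V' s := by
      intro s hs
      obtain ⟨hr'ne, he⟩ := h s hs
      have hVs := hVpos s hs; have hAs := hApos s hs
      have h1 : V' s * r s = (d:ℝ) * (r' s * V s) := by
        field_simp at he
        linarith [he]
      rw [hrdef s, hr_eq s hs] at h1
      have h2 : V' s * ((d:ℝ) * V s) * (A s)^2
          = (d:ℝ) * (((d:ℝ) * V' s * A s - (d:ℝ) * V s * A' s) * V s) * A s := by
        field_simp at h1
        linear_combination ((d:ℝ) * V s * A s) * h1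
      have hc : (d:ℝ) * V s * A s ≠ 0 := by positivity
      have h3 : ((d:ℝ) * V s * A s) * (V' s * A s)
          = ((d:ℝ) * V s * A s) * ((d:ℝ) * V' s * A s - (d:ℝ) * V s * A' s) := by
        linear_combination h2
      have h4 := mul_left_cancel₀ hc h3
      linear_combination h4
    set G : ℝ → ℝ := fun t => A t ^ d / V t ^ (d-1) with hGdef
    have hG0 : ∀ s ∈ E, HasDerivAt G 0 s := by
      intro s hs
      have hVs := hVpos s hs; have hAs := hApos s hs
      have hAd : HasDerivAt (fun t => A t ^ d) (d * A s ^ (d-1) * A' s) s := by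
        simpa using (hA s hs).fun_pow d
      have hVd : HasDerivAt (fun t => V t ^ (d-1))
          (((d-1:ℕ):ℝ) * V s ^ (d-1-1) * V' s) s := by
        simpa using (hV s hs).fun_pow (d-1)
      have hder := hAd.fun_div hVd (by positivity : V s ^ (d-1) ≠ 0)
      convert hder using 1
      case e'_4 => rfl
      case e'_5 => rfl
      have e1 : A s ^ d = A s ^ (d-1) * A s := by
        rw [← pow_succ]; congr 1; omega
      have e2 : V s ^ (d-1) = V s ^ (d-1-1) * V s := by
        rw [← pow_succ]; congr 1; omega
      rw [eq_comm, div_eq_zero_iff]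
      left
      rw [e1, e2, hcast]
      linear_combination (A s ^ (d-1) * V s ^ (d-1-1)) * hArel s hs
    rcases E.eq_empty_or_nonempty with hEe | ⟨s₀, hs₀⟩
    · exact ⟨1, one_pos, by simp [hEe]⟩
    · refine ⟨G s₀, div_pos (pow_pos (hApos s₀ hs₀) _) (pow_pos (hVpos s₀ hs₀) _), ?_⟩
      have hconv : Convex ℝ E := convex_iff_ordConnected.mpr hE'
      intro s hs
      have hGconst : G s = G s₀ := by
        apply hconv.is_const_of_fderivWithin_eq_zero (𝕜 := ℝ)
          (fun t ht => ((hG0 t ht).differentiableAt).differentiableWithinAt)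
          ?_ hs hs₀
        intro t ht
        rw [fderivWithin_of_isOpen hE ht, (hG0 t ht).hasFDerivAt.fderiv]
        ext; simp
      have hVs := hVpos s hs
      have hfin : A s ^ d = G s * V s ^ (d-1) := by
        rw [hGdef]
        field_simp
      rw [hfin, hGconst]
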